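/- For all sufficiently small nonzero real x > 0, arcsin(arctan x) ≠ arctan(arcsin x); in particular the denominator in Arnold's limit is nonzero near 0. -/
import Mathlib

open Real Filter Set Topology

lemma analyticAt_rsin (x : ℝ) : AnalyticAt ℝ Real.sin x := by
  have h1 : AnalyticAt ℂ Complex.sin (x : ℂ) :=
    Complex.analyticAt_iff_eventually_differentiableAt.2
      (Eventually.of_forall fun z => Complex.differentiable_sin z)
  have h2 : AnalyticAt ℝ Complex.sin (x : ℂ) := h1.restrictScalars
  have h3 : AnalyticAt ℝ (fun y : ℝ => (y : ℂ)) x := Complex.ofRealCLM.analyticAt x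
  exact ((Complex.reCLM.analyticAt _).comp (h2.comp h3)).congr
    (Eventually.of_forall fun y => rfl)

lemma analyticAt_rcos (x : ℝ) : AnalyticAt ℝ Real.cos x := by
  have h1 : AnalyticAt ℂ Complex.cos (x : ℂ) :=
    Complex.analyticAt_iff_eventually_differentiableAt.2
      (Eventually.of_forall fun z => Complex.differentiable_cos z)
  have h2 : AnalyticAt ℝ Complex.cos (x : ℂ) := h1.restrictScalars
  have h3 : AnalyticAt ℝ (fun y : ℝ => (y : ℂ)) x := Complex.ofRealCLM.analyticAt x
  exact ((Complex.reCLM.analyticAt _).comp (h2.comp h3)).congr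
    (Eventually.of_forall fun y => rfl)

lemma analyticAt_rtan {x : ℝ} (hx : Real.cos x ≠ 0) : AnalyticAt ℝ Real.tan x :=
  ((analyticAt_rsin x).div (analyticAt_rcos x) hx).congr
    (Eventually.of_forall fun y => (Real.tan_eq_sin_div_cos y).symm)

/-- The auxiliary function `H w = tan (sin w) - sin (tan w)`. -/
noncomputable def Hfun (w : ℝ) : ℝ := Real.tan (Real.sin w) - Real.sin (Real.tan w)

lemma analyticOnNhd_H : AnalyticOnNhd ℝ Hfun (Ioo (-(π/2)) (π/2)) := by
  intro w hw
  have hcw : Real.cos w ≠ 0 := (Real.cos_pos_of_mem_Ioo hw).ne'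
  have hcs : Real.cos (Real.sin w) ≠ 0 := by
    refine (Real.cos_pos_of_mem_Ioo ⟨?_, ?_⟩).ne'
    · nlinarith [Real.neg_one_le_sin w, Real.pi_gt_three]
    · nlinarith [Real.sin_le_one w, Real.pi_gt_three]
  exact (((analyticAt_rtan hcs).comp (analyticAt_rsin w)).sub
    ((analyticAt_rsin _).comp (analyticAt_rtan hcw)))

lemma H_pos : 0 < Hfun 1.4 := by
  have hpi1 : π < 3.15 := Real.pi_lt_d2
  have hpi2 : π > 3.141592 := Real.pi_gt_d6
  have hs : Real.sin 1.4 = Real.cos (π/2 - 1.4) := (Real.cos_pi_div_two_sub 1.4).symm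
  have hcb : 1 - (π/2 - 1.4)^2/2 ≤ Real.cos (π/2 - 1.4) := Real.one_sub_sq_div_two_le_cos
  have hs1 : π/4 < Real.sin 1.4 := by rw [hs]; nlinarith
  have hs2 : Real.sin 1.4 < π/2 := by nlinarith [Real.sin_le_one 1.4]
  have htan : Real.tan (π/4) < Real.tan (Real.sin 1.4) := by
    apply Real.strictMonoOn_tan ⟨by nlinarith, by nlinarith⟩ ⟨by nlinarith, hs2⟩ hs1
  rw [Real.tan_pi_div_four] at htan
  have := Real.sin_le_one (Real.tan 1.4)
  unfold Hfun
  linarith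

theorem stmt_13 :
    ∃ δ : ℝ, 0 < δ ∧ ∀ x : ℝ, 0 < |x| → |x| < δ →
      Real.arcsin (Real.arctan x) ≠ Real.arctan (Real.arcsin x) := by
  by_contra hcon
  push_neg at hcon
  -- From the negation, H has zeros accumulating at 0.
  have hfreq : ∃ᶠ w in 𝓝[≠] (0:ℝ), Hfun w = 0 := by
    rw [Filter.frequently_iff]
    intro U hU
    obtain ⟨ε, hε, hball⟩ := Metric.mem_nhdsWithin_iff.1 hU
    have hcont : ContinuousAt (fun x : ℝ => Real.arcsin (Real.arctan x)) 0 :=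
      (Real.continuous_arcsin.comp Real.continuous_arctan).continuousAt
    have h0 : Real.arcsin (Real.arctan 0) = 0 := by
      simp [Real.arctan_zero, Real.arcsin_zero]
    obtain ⟨δ, hδ, hδ'⟩ := Metric.continuousAt_iff.1 hcont ε hε
    obtain ⟨x, hx0, hxδ, hpq⟩ := hcon (min δ 1) (lt_min hδ one_pos)
    set w := Real.arcsin (Real.arctan x) with hw
    have hx1 : |x| < 1 := lt_of_lt_of_le hxδ (min_le_right _ _)
    have harc1 : Real.arctan x < 1 := by
      calc Real.arctan x < Real.arctan 1 := Real.arctan_strictMono (by cases abs_lt.1 hx1; linarith)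
        _ = π/4 := Real.arctan_one
        _ ≤ 1 := by nlinarith [Real.pi_le_four]
    have harc2 : -1 < Real.arctan x := by
      calc (-1:ℝ) ≤ -(π/4) := by nlinarith [Real.pi_le_four]
        _ = Real.arctan (-1) := by rw [Real.arctan_neg, Real.arctan_one]
        _ < Real.arctan x := Real.arctan_strictMono (by cases abs_lt.1 hx1; linarith)
    have hsinw : Real.sin w = Real.arctan x :=
      Real.sin_arcsin harc2.le harc1.le
    have htanw : Real.tan w = Real.arcsin x := by
      rw [show Real.tan w = Real.tan (Real.arctan (Real.arcsin x)) from by rw [← hpq]]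
      exact Real.tan_arctan _
    have hHw : Hfun w = 0 := by
      unfold Hfun
      rw [hsinw, htanw, Real.tan_arctan, Real.sin_arcsin (by cases abs_lt.1 hx1; linarith)
        (by cases abs_lt.1 hx1; linarith)]
      ring
    have hwne : w ≠ 0 := by
      intro h
      rw [h, Real.sin_zero] at hsinw
      exact absurd (Real.arctan_eq_zero_iff.1 hsinw.symm) (by intro h'; simp [h'] at hx0)
    refine ⟨w, hball ⟨?_, hwne⟩, hHw⟩
    have hxd : dist x 0 < δ := by
      rw [Real.dist_eq, sub_zero]; exact lt_of_lt_of_le hxδ (min_le_left _ _)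
    have := hδ' hxd
    rw [h0] at this
    simpa [Metric.mem_ball, hw] using this
  -- Identity theorem: H vanishes on (-π/2, π/2), contradicting H_pos.
  have hzero : EqOn Hfun 0 (Ioo (-(π/2)) (π/2)) :=
    analyticOnNhd_H.eqOn_zero_of_preconnected_of_frequently_eq_zero
      isPreconnected_Ioo (by constructor <;> nlinarith [Real.pi_gt_three]) hfreq
  have h14 : (1.4:ℝ) ∈ Ioo (-(π/2)) (π/2) := by
    constructor <;> nlinarith [Real.pi_gt_three]
  have := hzero h14
  have := H_pos
  simp only [Pi.zero_apply] at *
  linarith [hzero h14, H_pos]
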